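/- The sequence {x^k} generated by the general AdaBB iteration is bounded: for all k ≥ 0, ‖x^k − x*‖ ≤ R. -/

import Mathlib

open scoped RealInnerProductSpace
open Finset Filter

noncomputable section

/-- The general AdaBB iteration (Algorithm 2 of the paper) for a convex differentiable
function `f : ℝⁿ → ℝ` that attains its minimum.  `f'` is the gradient of `f`,
`x` the iterates, `α` the stepsizes, `θ` the stepsize ratios and `lam` the short BB stepsizes. -/
structure AdaBB (n : ℕ) where
  f : EuclideanSpace ℝ (Fin n) → ℝ
  f' : EuclideanSpace ℝ (Fin n) → EuclideanSpace ℝ (Fin n)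
  x : ℕ → EuclideanSpace ℝ (Fin n)
  α : ℕ → ℝ
  θ : ℕ → ℝ
  lam : ℕ → ℝ
  hconv : ConvexOn ℝ Set.univ f
  hgrad : ∀ y, HasGradientAt f (f' y) y
  hmin : ∃ z, ∀ y, f z ≤ f y
  hα0 : 0 < α 0
  hθ0 : 0 ≤ θ 0
  hx1 : x 1 = x 0 - α 0 • f' (x 0)
  hne : ∀ k, f' (x (k + 1)) ≠ f' (x k)
  hlam : ∀ k, lam (k + 1) =
    ⟪f' (x (k + 1)) - f' (x k), x (k + 1) - x k⟫ / ‖f' (x (k + 1)) - f' (x k)‖ ^ 2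
  hlampos : ∀ k, 0 < lam (k + 1)
  hcase1 : ∀ k, α k ≤ lam (k + 1) →
    α (k + 1) = Real.sqrt (1 + θ k) * α k ∧ θ (k + 1) = α (k + 1) / α k
  hcase2 : ∀ k, α k / 2 < lam (k + 1) → lam (k + 1) < α k →
    (α (k + 1) = min (Real.sqrt (lam (k + 1) / (2 * (α k - lam (k + 1)))))
        (Real.sqrt ((1 + θ k) * lam (k + 1) / (2 * lam (k + 1) - α k))) * α k ∨
      α (k + 1) = lam (k + 1)) ∧
    θ (k + 1) = 2 * α (k + 1) / α k - α (k + 1) / lam (k + 1)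
  hcase3 : ∀ k, lam (k + 1) ≤ α k / 2 →
    (α (k + 1) = Real.sqrt (α k / (2 * (α k - lam (k + 1)))) * lam (k + 1) ∨
      α (k + 1) = lam (k + 1) / Real.sqrt 2) ∧
    θ (k + 1) = α (k + 1) / α k
  hstep : ∀ k, x (k + 2) = x (k + 1) - α (k + 1) • f' (x (k + 1))

namespace AdaBB

variable {n : ℕ}

/-- `M_k` (for `k ≥ 1`). -/
def M (S : AdaBB n) (k : ℕ) : ℝ :=
  if S.α (k - 1) ≤ S.lam k then 0
  else if S.α (k - 1) / 2 < S.lam k then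
    S.α k ^ 2 / (S.lam k * S.α (k - 1)) - S.α k ^ 2 / S.α (k - 1) ^ 2
  else S.α k ^ 2 / S.lam k ^ 2 - S.α k ^ 2 / (S.α (k - 1) * S.lam k)

/-- `P_k` for `k ≥ 1`. -/
def Paux (S : AdaBB n) (k : ℕ) : ℝ :=
  if S.α (k - 1) ≤ S.lam k then S.α k ^ 2 / S.α (k - 1)
  else if S.α (k - 1) / 2 < S.lam k then
    2 * S.α k ^ 2 / S.α (k - 1) - S.α k ^ 2 / S.lam k
  else S.α k ^ 2 / S.α (k - 1)

/-- `P_k`, with the convention `P_0 = P_1 - α_0`. -/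
def P (S : AdaBB n) (k : ℕ) : ℝ :=
  if k = 0 then S.Paux 1 - S.α 0 else S.Paux k

/-- `w_k = α_k + P_k - P_{k+1}`. -/
def w (S : AdaBB n) (k : ℕ) : ℝ := S.α k + S.P k - S.P (k + 1)

/-- The Lyapunov function `Υ_k` (for `k ≥ 1`), relative to a minimizer `xs` of `f`. -/
def Upsilon (S : AdaBB n) (xs : EuclideanSpace ℝ (Fin n)) (k : ℕ) : ℝ :=
  ‖S.x k - xs‖ ^ 2 + 2 * S.M k * ‖S.x k - S.x (k - 1)‖ ^ 2 +
    (2 * S.α (k - 1) + 2 * S.P (k - 1)) * (S.f (S.x (k - 1)) - S.f xs)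

end AdaBB

end
noncomputable section
namespace AdaBB

variable {n : ℕ}

open InnerProductSpace in
lemma grad_ineq (S : AdaBB n) (x y : EuclideanSpace ℝ (Fin n)) :
    S.f x + ⟪S.f' x, y - x⟫ ≤ S.f y := by
  set c : ℝ →ᵃ[ℝ] EuclideanSpace ℝ (Fin n) := AffineMap.lineMap x y with hc
  have hg : ConvexOn ℝ Set.univ (S.f ∘ c) := by
    have := S.hconv.comp_affineMap c
    simpa using this
  have hder : HasDerivAt (S.f ∘ c) ⟪S.f' x, y - x⟫ 0 := by
    have hcd : HasDerivAt (fun t : ℝ => c t) (y - x) 0 := by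
      have hfun : (fun t : ℝ => c t) = fun t : ℝ => t • (y - x) + x := by
        funext t
        simp [hc, AffineMap.lineMap_apply_module]
        module
      rw [hfun]
      simpa using ((hasDerivAt_id (0:ℝ)).smul_const (y - x)).add_const x
    have hf : HasFDerivAt S.f (toDual ℝ _ (S.f' x)) (c 0) := by
      simpa [hc] using (S.hgrad x).hasFDerivAt
    simpa using hf.comp_hasDerivAt 0 hcd
  have h := hg.le_slope_of_hasDerivAt (Set.mem_univ (0:ℝ)) (Set.mem_univ (1:ℝ)) one_pos hder
  have hs : slope (S.f ∘ c) 0 1 = S.f y - S.f x := by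
    simp [slope_def_field, hc]
  rw [hs] at h
  linarith

lemma step' (S : AdaBB n) (k : ℕ) :
    S.x (k + 1) = S.x k - S.α k • S.f' (S.x k) := by
  cases k with
  | zero => exact S.hx1
  | succ j => exact S.hstep j

lemma pos (S : AdaBB n) : ∀ k, 0 < S.α k ∧ 0 ≤ S.θ k := by
  intro k
  induction k with
  | zero => exact ⟨S.hα0, S.hθ0⟩
  | succ j ih =>
    obtain ⟨ha, hθ⟩ := ih
    have hlm := S.hlampos j
    rcases le_or_gt (S.α j) (S.lam (j + 1)) with h1 | h1
    · obtain ⟨hα, hθ'⟩ := S.hcase1 j h1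
      have hαpos : 0 < S.α (j + 1) := by
        rw [hα]
        have : (0:ℝ) < Real.sqrt (1 + S.θ j) := Real.sqrt_pos.mpr (by linarith)
        positivity
      exact ⟨hαpos, by rw [hθ']; positivity⟩
    · rcases le_or_gt (S.lam (j + 1)) (S.α j / 2) with h3 | h2
      · obtain ⟨hα, hθ'⟩ := S.hcase3 j h3
        have hαpos : 0 < S.α (j + 1) := by
          rcases hα with hα | hα <;> rw [hα]
          · have h0 : (0:ℝ) < Real.sqrt (S.α j / (2 * (S.α j - S.lam (j+1)))) :=
              Real.sqrt_pos.mpr (by apply div_pos ha; linarith)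
            positivity
          · have h0 : (0:ℝ) < Real.sqrt 2 := by positivity
            positivity
        exact ⟨hαpos, by rw [hθ']; positivity⟩
      · obtain ⟨hα, hθ'⟩ := S.hcase2 j h2 h1
        have hαpos : 0 < S.α (j + 1) := by
          rcases hα with hα | hα <;> rw [hα]
          · have hA : (0:ℝ) < Real.sqrt (S.lam (j+1) / (2 * (S.α j - S.lam (j+1)))) :=
              Real.sqrt_pos.mpr (by apply div_pos hlm; linarith)
            have hB : (0:ℝ) < Real.sqrt ((1 + S.θ j) * S.lam (j+1) / (2 * S.lam (j+1) - S.α j)) :=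
              Real.sqrt_pos.mpr (by apply div_pos (by nlinarith); linarith)
            have := lt_min hA hB
            positivity
          · exact hlm
        refine ⟨hαpos, ?_⟩
        have hθeq : S.θ (j + 1) = S.α (j+1) * (2 * S.lam (j+1) - S.α j) / (S.α j * S.lam (j+1)) := by
          rw [hθ']
          field_simp
        rw [hθeq]
        have h2l : (0:ℝ) ≤ 2 * S.lam (j+1) - S.α j := by linarith
        positivity



lemma facts (S : AdaBB n) (j : ℕ) :
    0 < ‖S.f' (S.x (j+1)) - S.f' (S.x j)‖ ^ 2 ∧
    S.α j * ‖S.f' (S.x (j+1))‖ ^ 2 =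
      S.α j * ‖S.f' (S.x j)‖ ^ 2 +
        (S.α j - 2 * S.lam (j+1)) * ‖S.f' (S.x (j+1)) - S.f' (S.x j)‖ ^ 2 ∧
    S.α j * ‖S.f' (S.x j)‖ ^ 2 ≤
      S.lam (j+1) * ‖S.f' (S.x (j+1)) - S.f' (S.x j)‖ ^ 2 +
        (S.f (S.x j) - S.f (S.x (j+1))) ∧
    S.lam (j+1) ^ 2 * ‖S.f' (S.x (j+1)) - S.f' (S.x j)‖ ^ 2 ≤
      S.α j ^ 2 * ‖S.f' (S.x j)‖ ^ 2 := by
  have hl := S.hlam j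
  set a := S.α j with ha
  set lm := S.lam (j+1) with hlm
  set u := S.f' (S.x j) with hu
  set v := S.f' (S.x (j+1)) with hv
  set t := ‖v - u‖ ^ 2 with htdef
  have ht : 0 < t := by
    have hne : v - u ≠ 0 := sub_ne_zero.mpr (S.hne j)
    exact pow_pos (norm_pos_iff.mpr hne) 2
  have hxd : S.x (j+1) - S.x j = -(a • u) := by
    rw [S.step' j]; abel
  have hipx : ⟪v - u, S.x (j+1) - S.x j⟫ = lm * t := by
    rw [hl, div_mul_cancel₀ _ ht.ne']
  have hinner : lm * t = a * ‖u‖^2 - a * ⟪v, u⟫ := by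
    rw [← hipx, hxd]
    rw [inner_neg_right, real_inner_smul_right, inner_sub_left,
      real_inner_self_eq_norm_sq]
    ring
  have hexp : t = ‖v‖^2 - 2 * ⟪v, u⟫ + ‖u‖^2 := by
    rw [htdef, @norm_sub_sq_real]
  refine ⟨ht, by linear_combination (-a) * hexp + 2 * hinner, ?_, ?_⟩
  · -- F1
    have hgi := S.grad_ineq (S.x (j+1)) (S.x j)
    have hd : S.x j - S.x (j+1) = a • u := by rw [S.step' j]; abel
    rw [hd, real_inner_smul_right, ← hv] at hgi
    linarith [hinner, hgi]
  · -- Cauchy-Schwarz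
    have hcs := abs_real_inner_le_norm (v - u) (S.x (j+1) - S.x j)
    rw [hipx] at hcs
    have hnx : ‖S.x (j+1) - S.x j‖ = |a| * ‖u‖ := by
      rw [hxd, norm_neg, norm_smul, Real.norm_eq_abs]
    have hsq : (lm * t)^2 ≤ (‖v - u‖ * ‖S.x (j+1) - S.x j‖)^2 := by
      rw [← sq_abs (lm * t)]
      exact pow_le_pow_left₀ (abs_nonneg _) hcs 2
    have hs2 : (‖v - u‖ * ‖S.x (j+1) - S.x j‖)^2 = t * (a^2 * ‖u‖^2) := by
      rw [mul_pow, hnx, mul_pow, sq_abs, ← htdef]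
    rw [hs2] at hsq
    rw [← mul_le_mul_iff_of_pos_right ht]
    nlinarith [hsq]

set_option maxHeartbeats 1000000 in
lemma MP (S : AdaBB n) (j : ℕ) :
    0 ≤ S.M (j+1) ∧ 2 * S.M (j+1) ≤ 1 ∧ 0 ≤ S.Paux (j+1) ∧
      S.Paux (j+1) ≤ (1 + S.θ j) * S.α j ∧
      S.Paux (j+1) = S.θ (j+1) * S.α (j+1) := by
  obtain ⟨ha, hθ⟩ := S.pos j
  obtain ⟨hb, -⟩ := S.pos (j+1)
  have hlm := S.hlampos j
  have hM1 : S.M (j+1) = if S.α j ≤ S.lam (j+1) then 0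
      else if S.α j / 2 < S.lam (j+1) then
        S.α (j+1)^2/(S.lam (j+1)*S.α j) - S.α (j+1)^2/S.α j^2
      else S.α (j+1)^2/S.lam (j+1)^2 - S.α (j+1)^2/(S.α j*S.lam (j+1)) := by
    simp [M]
  have hP1 : S.Paux (j+1) = if S.α j ≤ S.lam (j+1) then S.α (j+1)^2/S.α j
      else if S.α j / 2 < S.lam (j+1) then
        2 * S.α (j+1)^2/S.α j - S.α (j+1)^2/S.lam (j+1)
      else S.α (j+1)^2/S.α j := by
    simp [Paux]
  set a := S.α j with hadef
  set b := S.α (j+1) with hbdef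
  set lm := S.lam (j+1) with hlmdef
  clear_value a b lm
  have hane : a ≠ 0 := ha.ne'
  have hlmne : lm ≠ 0 := hlm.ne'
  rcases le_or_gt a lm with h1 | h1
  · -- case i
    obtain ⟨hα, hθ'⟩ := S.hcase1 j (by rw [← hadef, ← hlmdef]; exact h1)
    simp only [← hadef, ← hbdef, ← hlmdef] at hα hθ'
    have hb2 : b^2 = (1 + S.θ j) * a^2 := by
      rw [hα, mul_pow, Real.sq_sqrt (by linarith)]
    rw [hM1, if_pos h1, hP1, if_pos h1]
    refine ⟨le_refl 0, by norm_num, by positivity, ?_, ?_⟩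
    · rw [hb2]
      have he : (1 + S.θ j) * a^2 / a = (1 + S.θ j) * a := by
        field_simp
      rw [he]
    · rw [hθ']
      field_simp
  · rw [hM1, if_neg (not_le.mpr h1), hP1, if_neg (not_le.mpr h1)]
    rcases le_or_gt lm (a/2) with h3 | h2
    · -- case iii
      rw [if_neg (not_lt.mpr h3), if_neg (not_lt.mpr h3)]
      obtain ⟨hα, hθ'⟩ := S.hcase3 j (by rw [← hadef, ← hlmdef]; exact h3)
      simp only [← hadef, ← hbdef, ← hlmdef] at hα hθ'
      have hMf : b^2/lm^2 - b^2/(a*lm) = b^2*(a - lm)/(a*lm^2) := by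
        field_simp
      have hb2 : b^2 * (2*(a - lm)) ≤ a * lm^2 := by
        rcases hα with hα | hα
        · have h2ne : (2*(a - lm)) ≠ 0 := by intro h; simp at h; linarith
          have e : (Real.sqrt (a/(2*(a - lm))) * lm)^2 * (2*(a - lm)) = a * lm^2 := by
            rw [mul_pow, Real.sq_sqrt (div_nonneg ha.le (by linarith))]
            field_simp
          rw [hα]; linarith [e]
        · rw [hα, div_pow, Real.sq_sqrt (by norm_num : (0:ℝ) ≤ 2)]
          nlinarith [mul_pos (mul_pos hlm hlm) hlm]
      have h4 : b^2 * a ≤ lm^2 * a := by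
        nlinarith [hb2, mul_le_mul_of_nonneg_left (show a ≤ 2*(a - lm) by linarith) (sq_nonneg b)]
      have hbsq : b^2 ≤ lm^2 := le_of_mul_le_mul_right (by linarith) ha
      refine ⟨?_, ?_, by positivity, ?_, ?_⟩
      · rw [hMf]
        exact div_nonneg (mul_nonneg (sq_nonneg b) (by linarith)) (mul_pos ha (pow_pos hlm 2)).le
      · rw [hMf, mul_div_assoc', div_le_one (mul_pos ha (pow_pos hlm 2))]
        linarith [hb2]
      · rw [div_le_iff₀ ha]
        nlinarith [hbsq, mul_self_le_mul_self hlm.le h3, mul_nonneg hθ (sq_nonneg a)]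
      · rw [hθ']
        field_simp
    · -- case ii
      rw [if_pos h2, if_pos h2]
      obtain ⟨hα, hθ'⟩ := S.hcase2 j (by rw [← hadef, ← hlmdef]; exact h2) (by rw [← hadef, ← hlmdef]; exact h1)
      simp only [← hadef, ← hbdef, ← hlmdef] at hα hθ'
      have hMf : b^2/(lm*a) - b^2/a^2 = b^2*(a - lm)/(lm*a^2) := by
        field_simp
      have hPf : 2*b^2/a - b^2/lm = b^2*(2*lm - a)/(lm*a) := by
        field_simp
      have hbounds : b^2 * (2*(a - lm)) ≤ lm * a^2 ∧
          b^2 * (2*lm - a) ≤ (1 + S.θ j) * lm * a^2 := by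
        rcases hα with hα | hα
        · set sA := Real.sqrt (lm / (2 * (a - lm))) with hsA
          set sB := Real.sqrt ((1 + S.θ j) * lm / (2 * lm - a)) with hsB
          have h0 : (0:ℝ) ≤ min sA sB := le_min (Real.sqrt_nonneg _) (Real.sqrt_nonneg _)
          have hmA : (min sA sB)^2 * (2*(a - lm)) ≤ lm := by
            have hA : (min sA sB)^2 ≤ lm/(2*(a - lm)) := by
              calc (min sA sB)^2 ≤ sA^2 := pow_le_pow_left₀ h0 (min_le_left _ _) 2
                _ = lm/(2*(a - lm)) := Real.sq_sqrt (div_nonneg hlm.le (by linarith))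
            exact (le_div_iff₀ (by linarith)).mp hA
          have hmB : (min sA sB)^2 * (2*lm - a) ≤ (1 + S.θ j) * lm := by
            have hB : (min sA sB)^2 ≤ (1 + S.θ j) * lm/(2*lm - a) := by
              calc (min sA sB)^2 ≤ sB^2 := pow_le_pow_left₀ h0 (min_le_right _ _) 2
                _ = (1 + S.θ j) * lm/(2*lm - a) :=
                    Real.sq_sqrt (div_nonneg (mul_nonneg (by linarith) hlm.le) (by linarith))
            exact (le_div_iff₀ (by linarith)).mp hB
          constructor
          · rw [hα, mul_pow]
            linarith [mul_le_mul_of_nonneg_right hmA (sq_nonneg a)]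
          · rw [hα, mul_pow]
            linarith [mul_le_mul_of_nonneg_right hmB (sq_nonneg a)]
        · constructor
          · rw [hα]
            nlinarith [mul_nonneg hlm.le (sq_nonneg (a - lm)), mul_nonneg hlm.le (sq_nonneg lm)]
          · rw [hα]
            nlinarith [mul_nonneg (by linarith : (0:ℝ) ≤ a - lm) (by linarith : (0:ℝ) ≤ a + lm),
              mul_nonneg hlm.le (by linarith : (0:ℝ) ≤ a - lm), mul_nonneg hθ (sq_nonneg a)]
      obtain ⟨hbA, hbB⟩ := hbounds
      refine ⟨?_, ?_, ?_, ?_, ?_⟩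
      · rw [hMf]
        exact div_nonneg (mul_nonneg (sq_nonneg b) (by linarith)) (mul_pos hlm (pow_pos ha 2)).le
      · rw [hMf, mul_div_assoc', div_le_one (mul_pos hlm (pow_pos ha 2))]
        linarith [hbA]
      · rw [hPf]
        exact div_nonneg (mul_nonneg (sq_nonneg b) (by linarith)) (mul_pos hlm ha).le
      · rw [hPf, div_le_iff₀ (mul_pos hlm ha)]
        linarith [hbB]
      · rw [hθ']
        field_simp

set_option maxHeartbeats 1000000 in
lemma goal_ineq (S : AdaBB n) (j : ℕ) :
    S.α (j+1)^2 * ‖S.f' (S.x (j+1))‖^2 ≤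
      S.M (j+1) * (S.α j^2 * ‖S.f' (S.x j)‖^2) +
        S.Paux (j+1) * (S.f (S.x j) - S.f (S.x (j+1))) := by
  obtain ⟨ha, hθ⟩ := S.pos j
  obtain ⟨hb, -⟩ := S.pos (j+1)
  have hlm := S.hlampos j
  obtain ⟨ht, hid, hF1, hcs⟩ := S.facts j
  have hM1 : S.M (j+1) = if S.α j ≤ S.lam (j+1) then 0
      else if S.α j / 2 < S.lam (j+1) then
        S.α (j+1)^2/(S.lam (j+1)*S.α j) - S.α (j+1)^2/S.α j^2
      else S.α (j+1)^2/S.lam (j+1)^2 - S.α (j+1)^2/(S.α j*S.lam (j+1)) := by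
    simp [M]
  have hP1 : S.Paux (j+1) = if S.α j ≤ S.lam (j+1) then S.α (j+1)^2/S.α j
      else if S.α j / 2 < S.lam (j+1) then
        2 * S.α (j+1)^2/S.α j - S.α (j+1)^2/S.lam (j+1)
      else S.α (j+1)^2/S.α j := by
    simp [Paux]
  set a := S.α j with hadef
  set b := S.α (j+1) with hbdef
  set lm := S.lam (j+1) with hlmdef
  set G := ‖S.f' (S.x j)‖^2 with hGdef
  set g := ‖S.f' (S.x (j+1))‖^2 with hgdef
  set t := ‖S.f' (S.x (j+1)) - S.f' (S.x j)‖^2 with htdef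
  set δ := S.f (S.x j) - S.f (S.x (j+1)) with hddef
  clear_value a b lm G g t δ
  have hG : 0 ≤ G := by rw [hGdef]; positivity
  have hg : 0 ≤ g := by rw [hgdef]; positivity
  have hane : a ≠ 0 := ha.ne'
  have hlmne : lm ≠ 0 := hlm.ne'
  rcases le_or_gt a lm with h1 | h1
  · -- case i
    rw [hM1, if_pos h1, hP1, if_pos h1]
    have hag : a * g ≤ δ := by
      have hp : (a - lm) * t ≤ 0 := mul_nonpos_of_nonpos_of_nonneg (by linarith) ht.le
      linarith [hid, hF1, hp]
    rw [zero_mul, zero_add, div_mul_eq_mul_div, le_div_iff₀ ha]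
    nlinarith [mul_le_mul_of_nonneg_left hag (sq_nonneg b)]
  · rw [hM1, if_neg (not_le.mpr h1), hP1, if_neg (not_le.mpr h1)]
    rcases le_or_gt lm (a/2) with h3 | h2
    · -- case iii
      rw [if_neg (not_lt.mpr h3), if_neg (not_lt.mpr h3)]
      have hkey : lm^2*(a*g) ≤ (a - lm)*(a^2*G) + lm^2*δ := by
        have hp1 : 0 ≤ (a - lm)*(a^2*G - lm^2*t) :=
          mul_nonneg (by linarith) (by linarith [hcs])
        have hp2 : 0 ≤ lm^2*(lm*t + δ - a*G) :=
          mul_nonneg (sq_nonneg _) (by linarith [hF1])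
        nlinarith [hp1, hp2, hid]
      have hc : (0:ℝ) ≤ b^2/(a*lm^2) := by positivity
      have hL : b^2*g = b^2/(a*lm^2)*(lm^2*(a*g)) := by field_simp
      have hR : (b^2/lm^2 - b^2/(a*lm))*(a^2*G) + b^2/a*δ
          = b^2/(a*lm^2)*((a - lm)*(a^2*G) + lm^2*δ) := by field_simp
      rw [hL, hR]
      exact mul_le_mul_of_nonneg_left hkey hc
    · -- case ii
      rw [if_pos h2, if_pos h2]
      have hkey : lm*(a*g) ≤ (a - lm)*(a*G) + (2*lm - a)*δ := by
        have hp : 0 ≤ (2*lm - a)*(lm*t + δ - a*G) :=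
          mul_nonneg (by linarith) (by linarith [hF1])
        nlinarith [hp, hid]
      have hc : (0:ℝ) ≤ b^2/(lm*a) := by positivity
      have hL : b^2*g = b^2/(lm*a)*(lm*(a*g)) := by field_simp
      have hR : (b^2/(lm*a) - b^2/a^2)*(a^2*G) + (2*b^2/a - b^2/lm)*δ
          = b^2/(lm*a)*((a - lm)*(a*G) + (2*lm - a)*δ) := by field_simp
      rw [hL, hR]
      exact mul_le_mul_of_nonneg_left hkey hc

lemma A_ineq (S : AdaBB n) (xs : EuclideanSpace ℝ (Fin n)) (k : ℕ) :
    ‖S.x (k+1) - xs‖^2 ≤ ‖S.x k - xs‖^2 - 2*S.α k*(S.f (S.x k) - S.f xs)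
      + S.α k^2 * ‖S.f' (S.x k)‖^2 := by
  obtain ⟨ha, -⟩ := S.pos k
  have hx : S.x (k+1) - xs = (S.x k - xs) - S.α k • S.f' (S.x k) := by
    rw [S.step' k]; abel
  rw [hx, @norm_sub_sq_real]
  have h1 : ⟪S.x k - xs, S.α k • S.f' (S.x k)⟫ = S.α k * ⟪S.f' (S.x k), S.x k - xs⟫ := by
    rw [real_inner_smul_right, real_inner_comm]
  have h2 : ‖S.α k • S.f' (S.x k)‖^2 = S.α k^2 * ‖S.f' (S.x k)‖^2 := by
    rw [norm_smul, Real.norm_eq_abs, mul_pow, sq_abs]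
  have hgi := S.grad_ineq (S.x k) xs
  have h3 : ⟪S.f' (S.x k), xs - S.x k⟫ = -⟪S.f' (S.x k), S.x k - xs⟫ := by
    rw [show xs - S.x k = -(S.x k - xs) by abel, inner_neg_right]
  rw [h3] at hgi
  have h4 : S.f (S.x k) - S.f xs ≤ ⟪S.f' (S.x k), S.x k - xs⟫ := by linarith
  have h5 := mul_le_mul_of_nonneg_left h4 ha.le
  rw [h1, h2]
  linarith [h5]

lemma hdiff (S : AdaBB n) (k : ℕ) :
    ‖S.x (k+1) - S.x k‖^2 = S.α k^2 * ‖S.f' (S.x k)‖^2 := by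
  have hx : S.x (k+1) - S.x k = -(S.α k • S.f' (S.x k)) := by
    rw [S.step' k]; abel
  rw [hx, norm_neg, norm_smul, Real.norm_eq_abs, mul_pow, sq_abs]

lemma paux_step (S : AdaBB n) (k : ℕ) : S.Paux (k+1) ≤ S.α k + S.P k := by
  cases k with
  | zero => simp [P]
  | succ j =>
    have h1 := (S.MP (j+1)).2.2.2.1
    have h2 := (S.MP j).2.2.2.2
    have hp : S.P (j+1) = S.Paux (j+1) := by simp [P]
    rw [hp, h2]
    linarith [h1]

lemma apk_nonneg (S : AdaBB n) (k : ℕ) : 0 ≤ S.α k + S.P k := by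
  cases k with
  | zero =>
    have := (S.MP 0).2.2.1
    simp only [P, if_pos rfl]
    norm_num at this ⊢
    linarith
  | succ j =>
    have h1 := (S.MP j).2.2.1
    have h2 := (S.pos (j+1)).1
    simp only [P, Nat.succ_ne_zero, if_false]
    linarith

lemma ups_succ (S : AdaBB n) (xs : EuclideanSpace ℝ (Fin n))
    (hxs : ∀ y, S.f xs ≤ S.f y) (k : ℕ) :
    S.Upsilon xs (k+2) ≤ S.Upsilon xs (k+1) := by
  have hA := S.A_ineq xs (k+1)
  have hd2 := S.hdiff (k+1)
  have hd1 := S.hdiff k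
  have hgoal := S.goal_ineq k
  have hM2 := (S.MP (k+1)).2.1
  have hPle := S.paux_step k
  have hFk : 0 ≤ S.f (S.x k) - S.f xs := sub_nonneg.mpr (hxs _)
  have hF1 : 0 ≤ S.f (S.x (k+1)) - S.f xs := sub_nonneg.mpr (hxs _)
  have hg : (0:ℝ) ≤ S.α (k+1)^2 * ‖S.f' (S.x (k+1))‖^2 := by positivity
  have hPP : S.P (k+1) = S.Paux (k+1) := by simp [P]
  have hp1 : 0 ≤ (1 - 2*S.M (k+2)) * (S.α (k+1)^2 * ‖S.f' (S.x (k+1))‖^2) :=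
    mul_nonneg (by linarith) hg
  have hp2 : 0 ≤ (S.α k + S.P k - S.Paux (k+1)) * (S.f (S.x k) - S.f xs) :=
    mul_nonneg (by linarith) hFk
  simp only [Upsilon, show k+2-1 = k+1 by rfl, show k+1-1 = k by rfl, hPP]
  rw [hd2, hd1]
  nlinarith [hA, hgoal, hp1, hp2]

end AdaBB
end

/-- Corollary 3.5: the sequence `{x^k}` generated by the general AdaBB iteration is bounded:
`‖x^k - x*‖ ≤ R` for all `k ≥ 0`, where
`R² = ‖x^0 - x*‖² + α_0²(1 + 2M_1)‖∇f(x^0)‖² + max{2P_1 - 2α_0, 0}·(f(x^0) - f_*)`. -/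
theorem adabb_bounded (n : ℕ) (S : AdaBB n)
    (xs : EuclideanSpace ℝ (Fin n)) (hxs : ∀ y, S.f xs ≤ S.f y)
    (R : ℝ) (hR0 : 0 ≤ R)
    (hR2 : R ^ 2 = ‖S.x 0 - xs‖ ^ 2 + S.α 0 ^ 2 * (1 + 2 * S.M 1) * ‖S.f' (S.x 0)‖ ^ 2 +
      max (2 * S.P 1 - 2 * S.α 0) 0 * (S.f (S.x 0) - S.f xs)) :
    ∀ k, ‖S.x k - xs‖ ≤ R := by
  have hF0 : 0 ≤ S.f (S.x 0) - S.f xs := sub_nonneg.mpr (hxs _)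
  have hP1 : S.P 1 = S.Paux 1 := by simp [AdaBB.P]
  have hU : ∀ m, S.Upsilon xs (m+1) ≤ R^2 := by
    intro m
    induction m with
    | zero =>
      have hA := S.A_ineq xs 0
      have hd := S.hdiff 0
      norm_num at hA hd
      have hM1 := (S.MP 0).1
      norm_num at hM1
      have hP0 : S.P 0 = S.Paux 1 - S.α 0 := by simp [AdaBB.P]
      have hp : 0 ≤ (max (2*S.P 1 - 2*S.α 0) 0 - (2*S.P 1 - 2*S.α 0)) * (S.f (S.x 0) - S.f xs) :=
        mul_nonneg (by linarith [le_max_left (2*S.P 1 - 2*S.α 0) (0:ℝ)]) hF0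
      simp only [AdaBB.Upsilon, show 1-1 = 0 by rfl]
      rw [hd, hP0, hR2, hP1]
      rw [hP1] at hp
      nlinarith [hA, hp]
    | succ m ih => exact le_trans (S.ups_succ xs hxs m) ih
  have h2 : ∀ j, ‖S.x j - xs‖^2 ≤ R^2 → ‖S.x j - xs‖ ≤ R := fun j h =>
    le_of_pow_le_pow_left₀ two_ne_zero hR0 h
  intro k
  cases k with
  | zero =>
    apply h2
    rw [hR2]
    have hM1 := (S.MP 0).1
    norm_num at hM1
    have hmx : (0:ℝ) ≤ max (2*S.P 1 - 2*S.α 0) 0 := le_max_right _ _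
    nlinarith [mul_nonneg hmx hF0,
      mul_nonneg (mul_nonneg (sq_nonneg (S.α 0)) (by linarith : (0:ℝ) ≤ 1 + 2*S.M 1))
        (sq_nonneg ‖S.f' (S.x 0)‖)]
  | succ m =>
    apply h2
    have hu := hU m
    have hM := (S.MP m).1
    have hap := S.apk_nonneg m
    have hFm : 0 ≤ S.f (S.x m) - S.f xs := sub_nonneg.mpr (hxs _)
    have hsq : (0:ℝ) ≤ ‖S.x (m+1) - S.x m‖^2 := sq_nonneg _
    simp only [AdaBB.Upsilon, Nat.add_sub_cancel] at hu
    nlinarith [mul_nonneg hM hsq, mul_nonneg hap hFm]
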